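/- Let P = conv((0,1,1),(1,0,1),(1,1,0),(−1,0,0),(0,−1,0),(0,0,−1)) ⊂ ℝ^3 (a lattice triangular prism). Then the only lattice points of P are its six vertices and the origin, the point (1,1,1) lies in 2P ∩ ℤ^3, and (1,1,1) is not the sum of two points of P ∩ ℤ^3; in particular, P is not IDP and has no unimodular cover. -/

import Mathlib

open scoped Pointwise

noncomputable section

/-- The real point corresponding to an integer point of `ℤ³`. -/
def toR3 (v : Fin 3 → ℤ) : Fin 3 → ℝ := fun i => (v i : ℝ)

/-- The set of lattice points of `ℝ³`. -/
def Lat3 : Set (Fin 3 → ℝ) := Set.range toR3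

/-- A unimodular tetrahedron: the convex hull of lattice points `v0, v1, v2, v3`
such that `v1 - v0, v2 - v0, v3 - v0` form a `ℤ`-basis of `ℤ³`. -/
def IsUnimodularTet (S : Set (Fin 3 → ℝ)) : Prop :=
  ∃ v : Fin 4 → Fin 3 → ℤ,
    S = convexHull ℝ {toR3 (v 0), toR3 (v 1), toR3 (v 2), toR3 (v 3)} ∧
    (Matrix.of ![v 1 - v 0, v 2 - v 0, v 3 - v 0]).det ∈ ({1, -1} : Set ℤ)

/-- A unimodular cover of `P`. -/
def HasUnimodularCover (P : Set (Fin 3 → ℝ)) : Prop :=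
  ∃ 𝒞 : Set (Set (Fin 3 → ℝ)),
    (∀ S ∈ 𝒞, IsUnimodularTet S ∧ S ⊆ P) ∧ ⋃₀ 𝒞 = P

/-- A polytope `R ⊆ ℝ³` is IDP if every lattice point of `nR` is a sum of `n`
lattice points of `R`, for every positive integer `n`. -/
def IsIDP3 (R : Set (Fin 3 → ℝ)) : Prop :=
  ∀ n : ℕ, 0 < n → ∀ z : Fin 3 → ℤ, toR3 z ∈ (n : ℝ) • R →
    ∃ f : Fin n → Fin 3 → ℤ, (∀ i, toR3 (f i) ∈ R) ∧ z = ∑ i, f i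

/-- The triangular prism of Example 3 in the paper. -/
def prismP : Set (Fin 3 → ℝ) :=
  convexHull ℝ {![0,1,1], ![1,0,1], ![1,1,0], ![-1,0,0], ![0,-1,0], ![0,0,-1]}


namespace PrismAux

lemma cons_val_five {α : Type*} {m : ℕ} (x : α) (u : Fin (m+5) → α) :
    Matrix.vecCons x u 5 =
      Matrix.vecHead (Matrix.vecTail (Matrix.vecTail (Matrix.vecTail (Matrix.vecTail u)))) :=
  rfl

def ptsP : Fin 6 → (Fin 3 → ℝ) := ![![0,1,1], ![1,0,1], ![1,1,0], ![-1,0,0], ![0,-1,0], ![0,0,-1]]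

def Qset : Set (Fin 3 → ℝ) :=
  {x | -1 ≤ x 0 + x 1 + x 2 ∧ x 0 + x 1 + x 2 ≤ 2 ∧
    -1 ≤ x 0 + x 1 - 2*x 2 ∧ -1 ≤ x 0 - 2*x 1 + x 2 ∧ -1 ≤ -2*x 0 + x 1 + x 2}

lemma convex_Qset : Convex ℝ Qset := by
  intro x hx y hy a b ha hb hab
  obtain ⟨h1, h2, h3, h4, h5⟩ := hx
  obtain ⟨g1, g2, g3, g4, g5⟩ := hy
  have e : ∀ i : Fin 3, (a • x + b • y) i = a * x i + b * y i := fun i => rfl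
  refine ⟨?_, ?_, ?_, ?_, ?_⟩ <;> rw [e, e, e] <;> nlinarith

lemma prism_subset_Q : prismP ⊆ Qset := by
  apply convexHull_min _ convex_Qset
  intro x hx
  simp only [Set.mem_insert_iff, Set.mem_singleton_iff] at hx
  rcases hx with rfl|rfl|rfl|rfl|rfl|rfl <;>
    refine ⟨?_, ?_, ?_, ?_, ?_⟩ <;> norm_num [Qset, Matrix.cons_val_two, Matrix.head_cons, Matrix.tail_cons]

lemma combo_mem (c : Fin 6 → ℝ) (h0 : ∀ i, 0 ≤ c i) (h1 : ∑ i, c i = 1) :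
    (∑ i, c i • ptsP i) ∈ prismP := by
  rw [← Finset.centerMass_eq_of_sum_1 _ _ h1]
  apply Finset.centerMass_mem_convexHull
  · intro i _; exact h0 i
  · rw [h1]; norm_num
  · intro i _
    fin_cases i <;> simp only [Set.mem_insert_iff, Set.mem_singleton_iff, ptsP] <;> tauto

lemma origin_mem : (![0,0,0] : Fin 3 → ℝ) ∈ prismP := by
  have := combo_mem ![1/3, 0, 0, 0, 1/3, 1/3] (by intro i; fin_cases i <;> norm_num)
    (by simp [Fin.sum_univ_six, cons_val_five, Matrix.vecHead, Matrix.vecTail]; norm_num)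
  convert this using 1
  funext k
  fin_cases k <;> simp [ptsP, Fin.sum_univ_six, cons_val_five, Matrix.vecHead, Matrix.vecTail] <;>
    norm_num

lemma half_mem : (![1/2,1/2,1/2] : Fin 3 → ℝ) ∈ prismP := by
  have := combo_mem ![5/18, 5/18, 5/18, 1/18, 1/18, 1/18] (by intro i; fin_cases i <;> norm_num)
    (by simp [Fin.sum_univ_six, cons_val_five, Matrix.vecHead, Matrix.vecTail]; norm_num)
  convert this using 1
  funext k
  fin_cases k <;> simp [ptsP, Fin.sum_univ_six, cons_val_five, Matrix.vecHead, Matrix.vecTail] <;>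
    norm_num

lemma vertex_mem (i : Fin 6) : ptsP i ∈ prismP := by
  apply subset_convexHull
  fin_cases i <;> simp only [Set.mem_insert_iff, Set.mem_singleton_iff, ptsP] <;> tauto

lemma int_classify (a b c : ℤ) (h1 : -1 ≤ a+b+c) (h2 : a+b+c ≤ 2) (h3 : -1 ≤ a+b-2*c)
    (h4 : -1 ≤ a-2*b+c) (h5 : -1 ≤ -2*a+b+c) :
    (a=0∧b=1∧c=1)∨(a=1∧b=0∧c=1)∨(a=1∧b=1∧c=0)∨(a=-1∧b=0∧c=0)∨(a=0∧b=-1∧c=0)∨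
      (a=0∧b=0∧c=-1)∨(a=0∧b=0∧c=0) := by omega

lemma part1 : prismP ∩ Lat3 =
    ({![0,1,1], ![1,0,1], ![1,1,0], ![-1,0,0], ![0,-1,0], ![0,0,-1], ![0,0,0]} :
      Set (Fin 3 → ℝ)) := by
  ext x
  constructor
  · rintro ⟨hxP, z, rfl⟩
    obtain ⟨h1, h2, h3, h4, h5⟩ := prism_subset_Q hxP
    simp only [toR3] at h1 h2 h3 h4 h5
    have h1' : -1 ≤ z 0 + z 1 + z 2 := by exact_mod_cast h1
    have h2' : z 0 + z 1 + z 2 ≤ 2 := by exact_mod_cast h2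
    have h3' : -1 ≤ z 0 + z 1 - 2 * z 2 := by exact_mod_cast h3
    have h4' : -1 ≤ z 0 - 2 * z 1 + z 2 := by exact_mod_cast h4
    have h5' : -1 ≤ -2 * z 0 + z 1 + z 2 := by exact_mod_cast h5
    have hc := int_classify _ _ _ h1' h2' h3' h4' h5'
    simp only [Set.mem_insert_iff, Set.mem_singleton_iff]
    rcases hc with ⟨e0,e1,e2⟩|⟨e0,e1,e2⟩|⟨e0,e1,e2⟩|⟨e0,e1,e2⟩|⟨e0,e1,e2⟩|⟨e0,e1,e2⟩|⟨e0,e1,e2⟩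
    · exact Or.inl (by funext k; fin_cases k <;> simp [toR3, e0, e1, e2])
    · exact Or.inr (Or.inl (by funext k; fin_cases k <;> simp [toR3, e0, e1, e2]))
    · exact Or.inr (Or.inr (Or.inl (by funext k; fin_cases k <;> simp [toR3, e0, e1, e2])))
    · exact Or.inr (Or.inr (Or.inr (Or.inl
        (by funext k; fin_cases k <;> simp [toR3, e0, e1, e2]))))
    · exact Or.inr (Or.inr (Or.inr (Or.inr (Or.inl
        (by funext k; fin_cases k <;> simp [toR3, e0, e1, e2])))))
    · exact Or.inr (Or.inr (Or.inr (Or.inr (Or.inr (Or.inl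
        (by funext k; fin_cases k <;> simp [toR3, e0, e1, e2]))))))
    · exact Or.inr (Or.inr (Or.inr (Or.inr (Or.inr (Or.inr
        (by funext k; fin_cases k <;> simp [toR3, e0, e1, e2]))))))
  · intro hx
    simp only [Set.mem_insert_iff, Set.mem_singleton_iff] at hx
    rcases hx with rfl|rfl|rfl|rfl|rfl|rfl|rfl
    · exact ⟨vertex_mem 0, ⟨![0,1,1], by funext k; fin_cases k <;> simp [toR3]⟩⟩
    · exact ⟨vertex_mem 1, ⟨![1,0,1], by funext k; fin_cases k <;> simp [toR3]⟩⟩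
    · exact ⟨vertex_mem 2, ⟨![1,1,0], by funext k; fin_cases k <;> simp [toR3]⟩⟩
    · exact ⟨vertex_mem 3, ⟨![-1,0,0], by funext k; fin_cases k <;> simp [toR3]⟩⟩
    · exact ⟨vertex_mem 4, ⟨![0,-1,0], by funext k; fin_cases k <;> simp [toR3]⟩⟩
    · exact ⟨vertex_mem 5, ⟨![0,0,-1], by funext k; fin_cases k <;> simp [toR3]⟩⟩
    · exact ⟨origin_mem, ⟨![0,0,0], by funext k; fin_cases k <;> simp [toR3]⟩⟩

lemma no_sum : ¬ ∃ x y : Fin 3 → ℝ, x ∈ prismP ∩ Lat3 ∧ y ∈ prismP ∩ Lat3 ∧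
    x + y = ![1,1,1] := by
  rintro ⟨x, y, hx, hy, hxy⟩
  rw [part1] at hx hy
  simp only [Set.mem_insert_iff, Set.mem_singleton_iff] at hx hy
  have h0 := congrFun hxy 0
  have h1 := congrFun hxy 1
  have h2 := congrFun hxy 2
  simp only [Pi.add_apply] at h0 h1 h2
  rcases hx with rfl|rfl|rfl|rfl|rfl|rfl|rfl <;>
    rcases hy with rfl|rfl|rfl|rfl|rfl|rfl|rfl <;>
      (revert h0 h1 h2; norm_num [Matrix.cons_val_two, Matrix.head_cons, Matrix.tail_cons])

lemma part2 : (![1,1,1] : Fin 3 → ℝ) ∈ (2:ℝ) • prismP := by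
  rw [Set.mem_smul_set]
  refine ⟨![1/2,1/2,1/2], half_mem, ?_⟩
  funext k
  fin_cases k <;> norm_num [Pi.smul_apply]

lemma exists_weights {E : Type*} [AddCommGroup E] [Module ℝ E] (p : Fin 4 → E) {x : E}
    (hx : x ∈ convexHull ℝ {p 0, p 1, p 2, p 3}) :
    ∃ w : Fin 4 → ℝ, (∀ i, 0 ≤ w i) ∧ ∑ i, w i = 1 ∧ ∑ i, w i • p i = x := by
  rw [convexHull_eq] at hx
  obtain ⟨ι, t, w, z, hw0, hw1, hz, hx⟩ := hx
  classical
  set g : ι → Fin 4 := fun i =>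
    if z i = p 0 then 0 else if z i = p 1 then 1 else if z i = p 2 then 2 else 3 with hg_def
  have hg : ∀ i ∈ t, p (g i) = z i := by
    intro i hi
    have hzi := hz i hi
    simp only [Set.mem_insert_iff, Set.mem_singleton_iff] at hzi
    simp only [hg_def]
    split_ifs with e1 e2 e3
    · exact e1.symm
    · exact e2.symm
    · exact e3.symm
    · rcases hzi with h|h|h|h
      · exact absurd h e1
      · exact absurd h e2
      · exact absurd h e3
      · exact h.symm
  refine ⟨fun j => ∑ i ∈ t.filter (g · = j), w i, ?_, ?_, ?_⟩
  · intro j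
    exact Finset.sum_nonneg fun i hi => hw0 i (Finset.mem_filter.1 hi).1
  · rw [Finset.sum_fiberwise_of_maps_to (fun i _ => Finset.mem_univ (g i))]
    exact hw1
  · rw [← hx, Finset.centerMass_eq_of_sum_1 _ _ hw1]
    rw [← Finset.sum_fiberwise_of_maps_to (fun i _ => Finset.mem_univ (g i)) (fun i => w i • z i)]
    refine Finset.sum_congr rfl fun j _ => ?_
    rw [Finset.sum_smul]
    refine Finset.sum_congr rfl fun i hi => ?_
    obtain ⟨hit, hgi⟩ := Finset.mem_filter.1 hi
    rw [← hg i hit, hgi]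

lemma four_split (a0 a1 a2 a3 : ℤ) (h0 : 0 ≤ a0) (h1 : 0 ≤ a1) (h2 : 0 ≤ a2) (h3 : 0 ≤ a3)
    (hs : a0 + a1 + a2 + a3 = 2) :
    (a0 = 2 ∧ a1 = 0 ∧ a2 = 0 ∧ a3 = 0) ∨
    (a0 = 0 ∧ a1 = 2 ∧ a2 = 0 ∧ a3 = 0) ∨
    (a0 = 0 ∧ a1 = 0 ∧ a2 = 2 ∧ a3 = 0) ∨
    (a0 = 0 ∧ a1 = 0 ∧ a2 = 0 ∧ a3 = 2) ∨
    (a0 = 1 ∧ a1 = 1 ∧ a2 = 0 ∧ a3 = 0) ∨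
    (a0 = 1 ∧ a1 = 0 ∧ a2 = 1 ∧ a3 = 0) ∨
    (a0 = 1 ∧ a1 = 0 ∧ a2 = 0 ∧ a3 = 1) ∨
    (a0 = 0 ∧ a1 = 1 ∧ a2 = 1 ∧ a3 = 0) ∨
    (a0 = 0 ∧ a1 = 1 ∧ a2 = 0 ∧ a3 = 1) ∨
    (a0 = 0 ∧ a1 = 0 ∧ a2 = 1 ∧ a3 = 1) := by
  have b0 : a0 = 0 ∨ a0 = 1 ∨ a0 = 2 := by omega
  have b1 : a1 = 0 ∨ a1 = 1 ∨ a1 = 2 := by omega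
  have b2 : a2 = 0 ∨ a2 = 1 ∨ a2 = 2 := by omega
  rcases b0 with rfl|rfl|rfl <;> rcases b1 with rfl|rfl|rfl <;> rcases b2 with rfl|rfl|rfl <;>
    (have b3 : a3 = 0 ∨ a3 = 1 ∨ a3 = 2 := by omega) <;> rcases b3 with rfl|rfl|rfl <;>
    revert hs <;> decide

lemma lin_helper (b0 b1 b2 b3 c0 c1 c2 c3 x0 x1 x2 x3 t : ℤ)
    (hk : b0 * x0 + b1 * x1 + b2 * x2 + b3 * x3 = t)
    (e0 : b0 = c0) (e1 : b1 = c1) (e2 : b2 = c2) (e3 : b3 = c3) :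
    c0 * x0 + c1 * x1 + c2 * x2 + c3 * x3 = t := by
  rw [e0, e1, e2, e3] at hk; exact hk

lemma unimod_key (v : Fin 4 → Fin 3 → ℤ)
    (hdet : (Matrix.of ![v 1 - v 0, v 2 - v 0, v 3 - v 0]).det ∈ ({1, -1} : Set ℤ))
    (w : Fin 4 → ℝ) (hw0 : ∀ i, 0 ≤ w i) (hw1 : ∑ i, w i = 1)
    (hm : ∑ i, w i • toR3 (v i) = ![1/2, 1/2, 1/2]) :
    ∃ i j, v i + v j = ![1, 1, 1] := by
  classical
  have hw4 : w 0 + w 1 + w 2 + w 3 = 1 := by rw [← hw1, Fin.sum_univ_four]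
  set A : Matrix (Fin 3) (Fin 3) ℤ := Matrix.of ![v 1 - v 0, v 2 - v 0, v 3 - v 0] with hA_def
  have hdd : A.det * A.det = 1 := by
    simp only [Set.mem_insert_iff, Set.mem_singleton_iff] at hdet
    rcases hdet with h|h <;> rw [h] <;> norm_num
  set B : Matrix (Fin 3) (Fin 3) ℤ := A.det • A.adjugate with hB_def
  have hAB : A * B = 1 := by
    rw [hB_def, Matrix.mul_smul, Matrix.mul_adjugate, smul_smul, hdd, one_smul]
  have hABr : A.map (Int.cast : ℤ → ℝ) * B.map (Int.cast : ℤ → ℝ) = 1 := by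
    have h2 := map_mul (Int.castRingHom ℝ).mapMatrix A B
    rw [hAB, map_one] at h2
    simpa only [RingHom.mapMatrix_apply, Int.coe_castRingHom] using h2.symm
  set c : Fin 3 → ℝ := ![w 1, w 2, w 3] with hc_def
  have hcA : Matrix.vecMul c (A.map (Int.cast : ℤ → ℝ)) = fun j => 1/2 - (v 0 j : ℝ) := by
    funext j
    have hmj := congrFun hm j
    have hhalf : (![1/2,1/2,1/2] : Fin 3 → ℝ) j = 1/2 := by fin_cases j <;> norm_num
    rw [hhalf] at hmj
    simp only [Finset.sum_apply, Pi.smul_apply, smul_eq_mul, Fin.sum_univ_four, toR3] at hmj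
    simp only [Matrix.vecMul, dotProduct, Fin.sum_univ_three, Matrix.map_apply, hA_def,
      Matrix.of_apply, Matrix.cons_val_zero, Matrix.cons_val_one, Matrix.cons_val_two,
      Matrix.head_cons, Matrix.tail_cons, Pi.sub_apply, Int.cast_sub, hc_def]
    linear_combination hmj - (v 0 j : ℝ) * hw4
  have hc : c = Matrix.vecMul (fun j => 1/2 - (v 0 j : ℝ)) (B.map (Int.cast : ℤ → ℝ)) := by
    rw [← hcA, Matrix.vecMul_vecMul, hABr, Matrix.vecMul_one]
  set n3 : Fin 3 → ℤ := Matrix.vecMul (fun j => 1 - 2 * v 0 j) B with hn3_def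
  have hn3 : ∀ i, (n3 i : ℝ) = 2 * c i := by
    intro i
    have h1 : (n3 i : ℝ) = ∑ j : Fin 3, ((1 : ℝ) - 2 * (v 0 j : ℝ)) * (B j i : ℝ) := by
      simp only [hn3_def, Matrix.vecMul, dotProduct]
      push_cast
      ring
    rw [h1, hc]
    simp only [Matrix.vecMul, dotProduct, Matrix.map_apply]
    rw [Finset.mul_sum]
    refine Finset.sum_congr rfl fun j _ => by ring
  have hc0 : c 0 = w 1 := rfl
  have hc1 : c 1 = w 2 := rfl
  have hc2 : c 2 = w 3 := rfl
  obtain ⟨N, hN_def⟩ : ∃ N : Fin 4 → ℤ, N = ![2 - (n3 0 + n3 1 + n3 2), n3 0, n3 1, n3 2] :=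
    ⟨_, rfl⟩
  have hN : ∀ i, (N i : ℝ) = 2 * w i := by
    intro i
    have e0 := hn3 0; have e1 := hn3 1; have e2 := hn3 2
    rw [hc0] at e0; rw [hc1] at e1; rw [hc2] at e2
    subst hN_def
    fin_cases i
    · show ((2 - (n3 0 + n3 1 + n3 2) : ℤ) : ℝ) = 2 * w 0
      push_cast
      linarith
    · show ((n3 0 : ℤ) : ℝ) = 2 * w 1
      linarith
    · show ((n3 1 : ℤ) : ℝ) = 2 * w 2
      linarith
    · show ((n3 2 : ℤ) : ℝ) = 2 * w 3
      linarith
  have hNnn : ∀ i, 0 ≤ N i := by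
    intro i
    have h : (0:ℝ) ≤ (N i : ℝ) := by rw [hN i]; linarith [hw0 i]
    exact_mod_cast h
  have hNsum : N 0 + N 1 + N 2 + N 3 = 2 := by
    have h : ((N 0 + N 1 + N 2 + N 3 : ℤ) : ℝ) = ((2:ℤ) : ℝ) := by
      push_cast
      rw [hN 0, hN 1, hN 2, hN 3]
      linarith
    exact_mod_cast h
  have hNv : ∀ k : Fin 3, N 0 * v 0 k + N 1 * v 1 k + N 2 * v 2 k + N 3 * v 3 k
      = (![1,1,1] : Fin 3 → ℤ) k := by
    intro k
    have hmk := congrFun hm k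
    have hhalf : (![1/2,1/2,1/2] : Fin 3 → ℝ) k = 1/2 := by fin_cases k <;> norm_num
    rw [hhalf] at hmk
    simp only [Finset.sum_apply, Pi.smul_apply, smul_eq_mul, Fin.sum_univ_four, toR3] at hmk
    have hone : ((![1,1,1] : Fin 3 → ℤ) k : ℝ) = 1 := by fin_cases k <;> norm_num
    have h : ((N 0 * v 0 k + N 1 * v 1 k + N 2 * v 2 k + N 3 * v 3 k : ℤ) : ℝ)
        = ((![1,1,1] : Fin 3 → ℤ) k : ℝ) := by
      push_cast
      rw [hN 0, hN 1, hN 2, hN 3, hone]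
      linear_combination 2 * hmk
    exact_mod_cast h
  have h0 := hNnn 0; have h1 := hNnn 1; have h2 := hNnn 2; have h3 := hNnn 3
  have hcase := four_split _ _ _ _ h0 h1 h2 h3 hNsum
  rcases hcase with ⟨e0,e1,e2,e3⟩|⟨e0,e1,e2,e3⟩|⟨e0,e1,e2,e3⟩|⟨e0,e1,e2,e3⟩|⟨e0,e1,e2,e3⟩|
    ⟨e0,e1,e2,e3⟩|⟨e0,e1,e2,e3⟩|⟨e0,e1,e2,e3⟩|⟨e0,e1,e2,e3⟩|⟨e0,e1,e2,e3⟩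
  · refine ⟨0, 0, ?_⟩
    funext k
    have hk := lin_helper _ _ _ _ _ _ _ _ _ _ _ _ _ (hNv k) e0 e1 e2 e3
    show v 0 k + v 0 k = (![1,1,1] : Fin 3 → ℤ) k
    linarith [hk]
  · refine ⟨1, 1, ?_⟩
    funext k
    have hk := lin_helper _ _ _ _ _ _ _ _ _ _ _ _ _ (hNv k) e0 e1 e2 e3
    show v 1 k + v 1 k = (![1,1,1] : Fin 3 → ℤ) k
    linarith [hk]
  · refine ⟨2, 2, ?_⟩
    funext k
    have hk := lin_helper _ _ _ _ _ _ _ _ _ _ _ _ _ (hNv k) e0 e1 e2 e3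
    show v 2 k + v 2 k = (![1,1,1] : Fin 3 → ℤ) k
    linarith [hk]
  · refine ⟨3, 3, ?_⟩
    funext k
    have hk := lin_helper _ _ _ _ _ _ _ _ _ _ _ _ _ (hNv k) e0 e1 e2 e3
    show v 3 k + v 3 k = (![1,1,1] : Fin 3 → ℤ) k
    linarith [hk]
  · refine ⟨0, 1, ?_⟩
    funext k
    have hk := lin_helper _ _ _ _ _ _ _ _ _ _ _ _ _ (hNv k) e0 e1 e2 e3
    show v 0 k + v 1 k = (![1,1,1] : Fin 3 → ℤ) k
    linarith [hk]
  · refine ⟨0, 2, ?_⟩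
    funext k
    have hk := lin_helper _ _ _ _ _ _ _ _ _ _ _ _ _ (hNv k) e0 e1 e2 e3
    show v 0 k + v 2 k = (![1,1,1] : Fin 3 → ℤ) k
    linarith [hk]
  · refine ⟨0, 3, ?_⟩
    funext k
    have hk := lin_helper _ _ _ _ _ _ _ _ _ _ _ _ _ (hNv k) e0 e1 e2 e3
    show v 0 k + v 3 k = (![1,1,1] : Fin 3 → ℤ) k
    linarith [hk]
  · refine ⟨1, 2, ?_⟩
    funext k
    have hk := lin_helper _ _ _ _ _ _ _ _ _ _ _ _ _ (hNv k) e0 e1 e2 e3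
    show v 1 k + v 2 k = (![1,1,1] : Fin 3 → ℤ) k
    linarith [hk]
  · refine ⟨1, 3, ?_⟩
    funext k
    have hk := lin_helper _ _ _ _ _ _ _ _ _ _ _ _ _ (hNv k) e0 e1 e2 e3
    show v 1 k + v 3 k = (![1,1,1] : Fin 3 → ℤ) k
    linarith [hk]
  · refine ⟨2, 3, ?_⟩
    funext k
    have hk := lin_helper _ _ _ _ _ _ _ _ _ _ _ _ _ (hNv k) e0 e1 e2 e3
    show v 2 k + v 3 k = (![1,1,1] : Fin 3 → ℤ) k
    linarith [hk]

lemma not_IDP : ¬ IsIDP3 prismP := by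
  intro hIDP
  have h22 : ((2:ℕ) : ℝ) = (2:ℝ) := by norm_num
  have heq : toR3 ![1,1,1] = (![1,1,1] : Fin 3 → ℝ) := by
    funext k; fin_cases k <;> simp [toR3]
  have hmem : toR3 ![1,1,1] ∈ ((2:ℕ) : ℝ) • prismP := by
    rw [h22, heq]; exact part2
  obtain ⟨f, hf, hsum⟩ := hIDP 2 (by norm_num) ![1,1,1] hmem
  apply no_sum
  refine ⟨toR3 (f 0), toR3 (f 1), ⟨hf 0, ⟨f 0, rfl⟩⟩, ⟨hf 1, ⟨f 1, rfl⟩⟩, ?_⟩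
  have hsum2 : (![1,1,1] : Fin 3 → ℤ) = f 0 + f 1 := by rw [hsum, Fin.sum_univ_two]
  funext k
  have hk := congrFun hsum2 k
  have h111a : (![1,1,1] : Fin 3 → ℤ) k = 1 := by fin_cases k <;> norm_num
  have h111b : (![1,1,1] : Fin 3 → ℝ) k = 1 := by fin_cases k <;> norm_num
  rw [h111a] at hk
  simp only [Pi.add_apply] at hk
  show toR3 (f 0) k + toR3 (f 1) k = (![1,1,1] : Fin 3 → ℝ) k
  rw [h111b]
  simp only [toR3]
  exact_mod_cast hk.symm

lemma not_cover : ¬ HasUnimodularCover prismP := by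
  rintro ⟨𝒞, hC, hU⟩
  have hm2 : (![1/2,1/2,1/2] : Fin 3 → ℝ) ∈ ⋃₀ 𝒞 := by rw [hU]; exact half_mem
  obtain ⟨S, hSC, hmS⟩ := hm2
  obtain ⟨⟨vv, hSeq, hdet⟩, hSP⟩ := hC S hSC
  subst hSeq
  obtain ⟨w, hw0, hw1, hsum⟩ := exists_weights (fun i => toR3 (vv i)) hmS
  obtain ⟨i, j, hij⟩ := unimod_key vv hdet w hw0 hw1 hsum
  apply no_sum
  have hvm : ∀ l : Fin 4, toR3 (vv l) ∈ prismP := by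
    intro l
    apply hSP
    apply subset_convexHull
    fin_cases l <;> simp only [Set.mem_insert_iff, Set.mem_singleton_iff] <;> tauto
  refine ⟨toR3 (vv i), toR3 (vv j), ⟨hvm i, ⟨vv i, rfl⟩⟩, ⟨hvm j, ⟨vv j, rfl⟩⟩, ?_⟩
  funext k
  have hk := congrFun hij k
  simp only [Pi.add_apply] at hk
  have h111a : (![1,1,1] : Fin 3 → ℤ) k = 1 := by fin_cases k <;> norm_num
  have h111b : (![1,1,1] : Fin 3 → ℝ) k = 1 := by fin_cases k <;> norm_num
  rw [h111a] at hk
  show toR3 (vv i) k + toR3 (vv j) k = (![1,1,1] : Fin 3 → ℝ) k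
  rw [h111b]
  simp only [toR3]
  exact_mod_cast hk

end PrismAux

/-- The triangular prism `P` of the paper: its only lattice points are its six
vertices and the origin; `(1,1,1)` lies in `2P ∩ ℤ³` but is not a sum of two
lattice points of `P`.  In particular `P` is not IDP and has no unimodular
cover. -/
theorem triangular_prism_not_IDP :
    prismP ∩ Lat3 =
      ({![0,1,1], ![1,0,1], ![1,1,0], ![-1,0,0], ![0,-1,0], ![0,0,-1], ![0,0,0]} :
        Set (Fin 3 → ℝ)) ∧
    (![1,1,1] : Fin 3 → ℝ) ∈ (2:ℝ) • prismP ∧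
    (¬ ∃ x y : Fin 3 → ℝ, x ∈ prismP ∩ Lat3 ∧ y ∈ prismP ∩ Lat3 ∧
        x + y = ![1,1,1]) ∧
    ¬ IsIDP3 prismP ∧ ¬ HasUnimodularCover prismP := by
  refine ⟨PrismAux.part1, PrismAux.part2, PrismAux.no_sum, PrismAux.not_IDP, PrismAux.not_cover⟩
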